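/- The 'case' operation on distributions with error is ⊑-monotone: if u¹ ⊑ u² in Flat_e(I) and v¹(i) ⊑ v²(i) in Flat_e(J) for all i ∈ I, then ∑_{i∈I} u¹_i v¹(i) + u¹_⊤ e_⊤ ⊑ ∑_{i∈I} u²_i v²(i) + u²_⊤ e_⊤ in Flat_e(J). -/

import Mathlib

open scoped ENNReal

noncomputable section

def dot {I : Type*} (u v : I → ℝ≥0∞) : ℝ≥0∞ := ∑' i, u i * v i

def orth {I : Type*} (P : Set (I → ℝ≥0∞)) : Set (I → ℝ≥0∞) :=
  {v | ∀ u ∈ P, dot u v ≤ 1}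

/-- The Dirac mass at the error element `⊤` (encoded as `none`). -/
def eTop {I : Type*} : Option I → ℝ≥0∞ := fun x => x.elim 1 fun _ => 0

/-- Sub-probability distributions on `I` with an extra error point `⊤ = none`. -/
def Pflat (I : Type*) : Set (Option I → ℝ≥0∞) := {u | ∑' x, u x ≤ 1}

/-- The extensional preorder on `Pflat I`, defined via inversion indices:
`u ⊑ v` iff `u ⊤ + ∑_{i : u i > v i} u i ≤ v ⊤ + ∑_{i : u i > v i} v i`. -/
def extLE {I : Type*} (u v : Option I → ℝ≥0∞) : Prop :=
  u none + ∑' i : {i : I // v (some i) < u (some i)}, u (some i.1)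
    ≤ v none + ∑' i : {i : I // v (some i) < u (some i)}, v (some i.1)

/-- The `case` operation: `case(u, v) = ∑_i u_i · v(i) + u_⊤ · e_⊤`. -/
def caseOp {I J : Type*} (u : Option I → ℝ≥0∞) (v : I → Option J → ℝ≥0∞) :
    Option J → ℝ≥0∞ :=
  fun b => (∑' i, u (some i) * v i b) + u none * eTop b

/-- Splitting a sum over `Option α`. -/
lemma tsum_option_split {α : Type*} (f : Option α → ℝ≥0∞) :
    ∑' x, f x = f none + ∑' a, f (some a) := by
  let e : α ≃ ({(none : Option α)}ᶜ : Set (Option α)) :=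
    { toFun := fun a => ⟨some a, by simp⟩
      invFun := fun x => x.1.get (by
        have hx := x.2
        simp only [Set.mem_compl_iff, Set.mem_singleton_iff] at hx
        exact Option.isSome_iff_ne_none.mpr hx)
      left_inv := fun a => rfl
      right_inv := fun x => by
        apply Subtype.ext
        simp }
  have h := Summable.tsum_add_tsum_compl (s := ({(none : Option α)} : Set (Option α))) (f := f)
    ENNReal.summable ENNReal.summable
  rw [tsum_singleton] at h
  rw [← h]
  congr 1
  exact (e.tsum_eq fun x => f x.1).symm

/-- The subprobability bound for partial sums. -/
lemma partial_le_one {α : Type*} {w : Option α → ℝ≥0∞} (hw : w ∈ Pflat α) (S : Set α) :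
    w none + ∑' a : S, w (some a.1) ≤ 1 := by
  calc w none + ∑' a : S, w (some a.1)
      ≤ w none + ∑' a, w (some a) := by
        gcongr
        exact ENNReal.tsum_comp_le_tsum_of_injective Subtype.val_injective _
    _ = ∑' x, w x := (tsum_option_split w).symm
    _ ≤ 1 := hw

/-- Key lemma: `extLE` implies domination of all pairings with test functions bounded by 1. -/
lemma extLE_pair {α : Type*} {u v : Option α → ℝ≥0∞} (hv : v ∈ Pflat α) (h : extLE u v)
    (g : α → ℝ≥0∞) (hg : ∀ i, g i ≤ 1) :
    u none + ∑' i, u (some i) * g i ≤ v none + ∑' i, v (some i) * g i := by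
  set B : Set α := {i | v (some i) < u (some i)} with hB
  have hfin : ∑' i : B, v (some i.1) ≠ ∞ := by
    have h1 : ∑' i : B, v (some i.1) ≤ ∑' a, v (some a) :=
      ENNReal.tsum_comp_le_tsum_of_injective Subtype.val_injective _
    have h2 : ∑' a, v (some a) ≤ 1 := by
      have := partial_le_one hv Set.univ
      calc ∑' a, v (some a) = ∑' a : (Set.univ : Set α), v (some a.1) :=
            (tsum_univ fun a => v (some a)).symm
        _ ≤ 1 := le_trans (le_add_self) this
    exact ((h1.trans h2).trans_lt ENNReal.one_lt_top).ne
  -- decomposition of the sum over B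
  have hsplit : ∑' i : B, u (some i.1)
      = ∑' i : B, v (some i.1) + ∑' i : B, (u (some i.1) - v (some i.1)) := by
    rw [← ENNReal.tsum_add]
    exact tsum_congr fun i => (add_tsub_cancel_of_le i.2.le).symm
  have hkey : u none + ∑' i : B, (u (some i.1) - v (some i.1)) ≤ v none := by
    have h' : u none + ∑' i : B, u (some i.1) ≤ v none + ∑' i : B, v (some i.1) := h
    rw [hsplit] at h'
    have : (u none + ∑' i : B, (u (some i.1) - v (some i.1))) + ∑' i : B, v (some i.1)
        ≤ v none + ∑' i : B, v (some i.1) := by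
      calc (u none + ∑' i : B, (u (some i.1) - v (some i.1))) + ∑' i : B, v (some i.1)
          = u none + (∑' i : B, v (some i.1) + ∑' i : B, (u (some i.1) - v (some i.1))) := by
            ring
        _ ≤ v none + ∑' i : B, v (some i.1) := h'
    exact (ENNReal.add_le_add_iff_right hfin).mp this
  -- termwise bounds
  have hterm : ∀ i : B, u (some i.1) * g i.1
      ≤ v (some i.1) * g i.1 + (u (some i.1) - v (some i.1)) := by
    intro i
    calc u (some i.1) * g i.1
        = (v (some i.1) + (u (some i.1) - v (some i.1))) * g i.1 := by
          rw [add_tsub_cancel_of_le i.2.le]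
      _ = v (some i.1) * g i.1 + (u (some i.1) - v (some i.1)) * g i.1 := by
          rw [add_mul]
      _ ≤ v (some i.1) * g i.1 + (u (some i.1) - v (some i.1)) := by
          gcongr
          exact mul_le_of_le_one_right' (hg _)
  have hcompl : ∑' i : (Bᶜ : Set α), u (some i.1) * g i.1
      ≤ ∑' i : (Bᶜ : Set α), v (some i.1) * g i.1 := by
    refine ENNReal.tsum_le_tsum fun i => ?_
    have : ¬ v (some i.1) < u (some i.1) := i.2
    exact mul_le_mul_left (not_lt.mp this) _
  have hUsplit : ∑' i, u (some i) * g i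
      = ∑' i : B, u (some i.1) * g i.1 + ∑' i : (Bᶜ : Set α), u (some i.1) * g i.1 :=
    (Summable.tsum_add_tsum_compl (s := B) (f := fun i => u (some i) * g i)
      ENNReal.summable ENNReal.summable).symm
  have hVsplit : ∑' i, v (some i) * g i
      = ∑' i : B, v (some i.1) * g i.1 + ∑' i : (Bᶜ : Set α), v (some i.1) * g i.1 :=
    (Summable.tsum_add_tsum_compl (s := B) (f := fun i => v (some i) * g i)
      ENNReal.summable ENNReal.summable).symm
  calc u none + ∑' i, u (some i) * g i
      = u none + (∑' i : B, u (some i.1) * g i.1 + ∑' i : (Bᶜ : Set α), u (some i.1) * g i.1) := by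
        rw [hUsplit]
    _ ≤ u none + ((∑' i : B, v (some i.1) * g i.1 + ∑' i : B, (u (some i.1) - v (some i.1)))
          + ∑' i : (Bᶜ : Set α), v (some i.1) * g i.1) := by
        refine add_le_add_right (add_le_add ?_ hcompl) _
        calc ∑' i : B, u (some i.1) * g i.1
            ≤ ∑' i : B, (v (some i.1) * g i.1 + (u (some i.1) - v (some i.1))) :=
              ENNReal.tsum_le_tsum hterm
          _ = ∑' i : B, v (some i.1) * g i.1 + ∑' i : B, (u (some i.1) - v (some i.1)) :=
              ENNReal.tsum_add
    _ = (u none + ∑' i : B, (u (some i.1) - v (some i.1)))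
          + (∑' i : B, v (some i.1) * g i.1 + ∑' i : (Bᶜ : Set α), v (some i.1) * g i.1) := by
        ring
    _ ≤ v none + (∑' i : B, v (some i.1) * g i.1 + ∑' i : (Bᶜ : Set α), v (some i.1) * g i.1) :=
        add_le_add_left hkey _
    _ = v none + ∑' i, v (some i) * g i := by rw [hVsplit]

/-- Pairing with the indicator of a set computes a partial sum. -/
lemma tsum_mul_indicator {α : Type*} (w : α → ℝ≥0∞) (S : Set α) :
    ∑' a, w a * S.indicator 1 a = ∑' a : S, w a.1 := by
  rw [tsum_subtype]
  refine tsum_congr fun a => ?_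
  by_cases ha : a ∈ S <;> simp [Set.indicator_of_mem, Set.indicator_of_notMem, ha]

/-- Rewriting the relevant partial sums of `caseOp`. -/
lemma caseOp_partial {I J : Type*} (u : Option I → ℝ≥0∞) (v : I → Option J → ℝ≥0∞)
    (A : Set J) :
    caseOp u v none + ∑' j : A, caseOp u v (some j.1)
      = u none + ∑' i, u (some i) * (v i none + ∑' j : A, v i (some j.1)) := by
  have h1 : ∑' j : A, caseOp u v (some j.1)
      = ∑' i, u (some i) * ∑' j : A, v i (some j.1) := by
    calc ∑' j : A, caseOp u v (some j.1)
        = ∑' j : A, ∑' i, u (some i) * v i (some j.1) := by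
          refine tsum_congr fun j => ?_
          simp [caseOp, eTop]
      _ = ∑' i, ∑' j : A, u (some i) * v i (some j.1) := ENNReal.tsum_comm
      _ = ∑' i, u (some i) * ∑' j : A, v i (some j.1) := by
          refine tsum_congr fun i => ?_
          exact ENNReal.tsum_mul_left
  have h0 : caseOp u v none = ∑' i, u (some i) * v i none + u none := by
    simp [caseOp, eTop]
  have h2 : ∑' i, u (some i) * (v i none + ∑' j : A, v i (some j.1))
      = ∑' i, u (some i) * v i none + ∑' i, u (some i) * ∑' j : A, v i (some j.1) := by
    rw [← ENNReal.tsum_add]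
    exact tsum_congr fun i => mul_add _ _ _
  rw [h0, h1, h2]
  ring

theorem stmt15 {I J : Type*} [Countable I] [Countable J]
    (u₁ u₂ : Option I → ℝ≥0∞) (hu₁ : u₁ ∈ Pflat I) (hu₂ : u₂ ∈ Pflat I)
    (v₁ v₂ : I → Option J → ℝ≥0∞)
    (hv₁ : ∀ i, v₁ i ∈ Pflat J) (hv₂ : ∀ i, v₂ i ∈ Pflat J)
    (hu : extLE u₁ u₂) (hv : ∀ i, extLE (v₁ i) (v₂ i)) :
    extLE (caseOp u₁ v₁) (caseOp u₂ v₂) := by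
  set A : Set J := {j | caseOp u₂ v₂ (some j) < caseOp u₁ v₁ (some j)} with hA
  show caseOp u₁ v₁ none + ∑' j : A, caseOp u₁ v₁ (some j.1)
      ≤ caseOp u₂ v₂ none + ∑' j : A, caseOp u₂ v₂ (some j.1)
  rw [caseOp_partial, caseOp_partial]
  set g : I → ℝ≥0∞ := fun i => v₂ i none + ∑' j : A, v₂ i (some j.1) with hg
  have hgle : ∀ i, g i ≤ 1 := fun i => partial_le_one (hv₂ i) A
  have hstep : ∀ i, v₁ i none + ∑' j : A, v₁ i (some j.1) ≤ g i := by
    intro i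
    have := extLE_pair (hv₂ i) (hv i) (A.indicator 1) (fun j => by
      by_cases hj : j ∈ A <;>
        simp [Set.indicator_of_mem, Set.indicator_of_notMem, hj])
    rwa [tsum_mul_indicator, tsum_mul_indicator] at this
  calc u₁ none + ∑' i, u₁ (some i) * (v₁ i none + ∑' j : A, v₁ i (some j.1))
      ≤ u₁ none + ∑' i, u₁ (some i) * g i :=
        add_le_add_right (ENNReal.tsum_le_tsum fun i => mul_le_mul_right (hstep i) _) _
    _ ≤ u₂ none + ∑' i, u₂ (some i) * g i := extLE_pair hu₂ hu g hgle
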